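/- For simple motions with a target moving along a v-Lipschitz trajectory y_T (v < 1), the fixed-point iteration t₀ = 0, t_n = (‖y_T(t_{n−1})‖ + v·t_{n−1} − ℓ)/(1+v) when ‖y_T(t_{n−1})‖ > t_{n−1} + ℓ, else t_n = t_{n−1}, converges monotonically to T*[y_T] = min{t ≥ 0 : ‖y_T(t)‖ ≤ t + ℓ}, which is finite since v < 1. -/

import Mathlib

open Filter

/-- for simple motions in the plane with a `v`-Lipschitz target, `v < 1`,
the fixed-point iteration converges monotonically to the minimal interception time
`T* = min{t ≥ 0 : ‖y_T(t)‖ ≤ t + ℓ}`, which is finite. -/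
theorem simple_motions_iteration_converges (ℓ v : ℝ) (hℓ : 0 ≤ ℓ) (hv : 0 ≤ v) (hv1 : v < 1)
    (yT : ℝ → EuclideanSpace ℝ (Fin 2))
    (hyT : LipschitzOnWith (Real.toNNReal v) yT (Set.Ici (0 : ℝ)))
    (t : ℕ → ℝ) (ht0 : t 0 = 0)
    (hiter : ∀ n : ℕ, t (n + 1) =
      if t n + ℓ < ‖yT (t n)‖ then (‖yT (t n)‖ + v * t n - ℓ) / (1 + v) else t n) :
    ∃ Tstar : ℝ, IsLeast {s : ℝ | 0 ≤ s ∧ ‖yT s‖ ≤ s + ℓ} Tstar ∧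
      Monotone t ∧ Tendsto t atTop (nhds Tstar) := by
  have hv' : (0:ℝ) < 1 + v := by linarith
  have hK : ((Real.toNNReal v : NNReal) : ℝ) = v := Real.coe_toNNReal v hv
  -- distance bound
  have hdist : ∀ a b : ℝ, 0 ≤ a → a ≤ b → ‖yT a‖ ≤ ‖yT b‖ + v * (b - a) := by
    intro a b ha hab
    have hb : (0:ℝ) ≤ b := le_trans ha hab
    have hd := hyT.dist_le_mul a (Set.mem_Ici.2 ha) b (Set.mem_Ici.2 hb)
    rw [hK, Real.dist_eq, abs_of_nonpos (by linarith)] at hd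
    have htri : ‖yT a‖ - ‖yT b‖ ≤ dist (yT a) (yT b) := by
      rw [dist_eq_norm]; exact norm_sub_norm_le _ _
    linarith
  -- monotone
  have hmono : Monotone t := by
    apply monotone_nat_of_le_succ
    intro n
    rw [hiter n]
    split_ifs with h
    · rw [le_div_iff₀ hv']; nlinarith
    · exact le_rfl
  have hnn : ∀ n, 0 ≤ t n := fun n => ht0 ▸ hmono (Nat.zero_le n)
  -- every element of the set is an upper bound of the iteration
  have hub : ∀ s ∈ {s : ℝ | 0 ≤ s ∧ ‖yT s‖ ≤ s + ℓ}, ∀ n, t n ≤ s := by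
    rintro s ⟨hs0, hs⟩ n
    induction n with
    | zero => rw [ht0]; exact hs0
    | succ n ih =>
      rw [hiter n]
      split_ifs with h
      · rw [div_le_iff₀ hv']
        have := hdist (t n) s (hnn n) ih
        nlinarith
      · exact ih
  -- the set is nonempty
  have hne : ∃ s, s ∈ {s : ℝ | 0 ≤ s ∧ ‖yT s‖ ≤ s + ℓ} := by
    refine ⟨max 0 ((‖yT 0‖ - ℓ) / (1 - v)), le_max_left _ _, ?_⟩
    set s0 := max 0 ((‖yT 0‖ - ℓ) / (1 - v)) with hs0def
    have hs00 : (0:ℝ) ≤ s0 := le_max_left _ _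
    have h1 : (‖yT 0‖ - ℓ) / (1 - v) ≤ s0 := le_max_right _ _
    have h2 : ‖yT 0‖ - ℓ ≤ (1 - v) * s0 := by
      rw [div_le_iff₀ (by linarith : (0:ℝ) < 1 - v)] at h1; linarith [h1]
    have h3 : ‖yT s0‖ ≤ ‖yT s0‖ := le_refl _
    have hd : ‖yT s0‖ - ‖yT 0‖ ≤ v * s0 := by
      have hd' := hyT.dist_le_mul s0 (Set.mem_Ici.2 hs00) 0 (Set.mem_Ici.2 (le_refl 0))
      rw [hK, Real.dist_eq, abs_of_nonneg (by linarith)] at hd'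
      have htri : ‖yT s0‖ - ‖yT 0‖ ≤ dist (yT s0) (yT 0) := by
        rw [dist_eq_norm]; exact norm_sub_norm_le _ _
      simpa using le_trans htri (by simpa using hd')
    linarith
  obtain ⟨s0, hs0⟩ := hne
  have hbdd : BddAbove (Set.range t) := ⟨s0, by rintro x ⟨n, rfl⟩; exact hub s0 hs0 n⟩
  set L := ⨆ n, t n with hLdef
  have hlim : Tendsto t atTop (nhds L) := tendsto_atTop_ciSup hmono hbdd
  have hL0 : 0 ≤ L := le_trans (hnn 0) (le_ciSup hbdd 0)
  -- g and its continuity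
  set g : ℝ → ℝ := fun s => ‖yT s‖ - s - ℓ with hgdef
  have hgcont : ContinuousOn g (Set.Ici 0) := by
    apply ContinuousOn.sub
    apply ContinuousOn.sub
    · exact hyT.continuousOn.norm
    · exact continuousOn_id
    · exact continuousOn_const
  have hLmem : L ∈ Set.Ici (0:ℝ) := hL0
  have hwithin : Tendsto t atTop (nhdsWithin L (Set.Ici 0)) :=
    tendsto_nhdsWithin_of_tendsto_nhds_of_eventually_within _ hlim
      (Eventually.of_forall fun n => hnn n)
  have hgL : Tendsto (fun n => g (t n)) atTop (nhds (g L)) :=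
    ((hgcont L hLmem).tendsto).comp hwithin
  -- rewrite the iteration
  have hstep : ∀ n, t (n + 1) = t n + max (g (t n)) 0 / (1 + v) := by
    intro n
    rw [hiter n]
    split_ifs with h
    · rw [max_eq_left (by simp only [hgdef]; linarith)]
      field_simp
      ring
    · rw [max_eq_right (by simp only [hgdef]; push_neg at h; linarith)]
      simp
  have hlim1 : Tendsto (fun n => t (n + 1)) atTop (nhds L) :=
    hlim.comp (tendsto_add_atTop_nat 1)
  have hlim2 : Tendsto (fun n => t n + max (g (t n)) 0 / (1 + v)) atTop
      (nhds (L + max (g L) 0 / (1 + v))) :=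
    hlim.add ((hgL.max tendsto_const_nhds).div_const _)
  have heq : L = L + max (g L) 0 / (1 + v) := by
    apply tendsto_nhds_unique hlim1
    simpa only [hstep] using hlim2
  have hgL0 : g L ≤ 0 := by
    have h0 : max (g L) 0 / (1 + v) = 0 := by linarith
    field_simp at h0
    rw [mul_zero] at h0
    exact max_eq_right_iff.mp h0
  have hLS : L ∈ {s : ℝ | 0 ≤ s ∧ ‖yT s‖ ≤ s + ℓ} := ⟨hL0, by simp only [hgdef] at hgL0; linarith⟩
  refine ⟨L, ⟨hLS, fun s hs => ciSup_le fun n => hub s hs n⟩, hmono, hlim⟩
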